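/- Let q>1 be a real number. Then there exists C₀>0 such that |exp_q(z)| ≥ C₀ for every z∈ℂ with |z| < q^{1/2}/(q−1). -/

import Mathlib

set_option autoImplicit false
set_option maxHeartbeats 1000000

open Complex Real

/-- The q-factorial `[n]_q! = ∏_{j=1}^n (q^j - 1)/(q - 1)`. -/
noncomputable def qFactorial (q : ℝ) (n : ℕ) : ℝ :=
  ∏ j ∈ Finset.range n, ((q ^ (j + 1) - 1) / (q - 1))

/-- The q-exponential `exp_q(z) = ∑_{n ≥ 0} z^n / [n]_q!`. -/
noncomputable def qExp (q : ℝ) (z : ℂ) : ℂ :=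
  ∑' n : ℕ, z ^ n / (qFactorial q n : ℂ)

variable {q : ℝ}

lemma qFactorial_pos (hq : 1 < q) (n : ℕ) : 0 < qFactorial q n := by
  apply Finset.prod_pos
  intro j _
  have h1 : 1 < q ^ (j+1) := one_lt_pow₀ hq (by omega)
  exact div_pos (by linarith) (by linarith)

lemma one_le_qFactorial (hq : 1 < q) (n : ℕ) : 1 ≤ qFactorial q n := by
  rw [qFactorial]
  have := Finset.prod_le_prod (s := Finset.range n) (f := fun _ => (1:ℝ))
    (g := fun j => (q ^ (j + 1) - 1) / (q - 1)) (by intro i _; norm_num)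
    (by intro j _
        rw [le_div_iff₀ (by linarith)]
        have h1 : q ^ 1 ≤ q ^ (j+1) := pow_le_pow_right₀ (by linarith) (by omega)
        rw [pow_one] at h1
        show (1:ℝ) * (q - 1) ≤ q ^ (j + 1) - 1
        linarith)
  simpa using this

lemma qFactorial_succ (n : ℕ) :
    qFactorial q (n+1) = qFactorial q n * ((q ^ (n + 1) - 1) / (q - 1)) := by
  rw [qFactorial, Finset.prod_range_succ]; rfl

lemma summable_qExp (hq : 1 < q) (z : ℂ) :
    Summable (fun n : ℕ => z ^ n / (qFactorial q n : ℂ)) := by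
  apply summable_of_ratio_norm_eventually_le (r := 1/2) (by norm_num)
  have h := tendsto_pow_atTop_atTop_of_one_lt hq
  filter_upwards [h.eventually_ge_atTop (2 * ‖z‖ * (q-1) + 1)] with n hn
  have hFn := qFactorial_pos hq n
  have hFn1 := qFactorial_pos hq (n+1)
  have hq1 : q ^ (n+1) - 1 > 0 := by
    have : 1 < q ^ (n+1) := one_lt_pow₀ hq (by omega); linarith
  have hqn1 : 2 * ‖z‖ * (q-1) + 1 ≤ q ^ (n+1) := by
    calc 2*‖z‖*(q-1)+1 ≤ q ^ n := hn
    _ ≤ q ^ (n+1) := pow_le_pow_right₀ (by linarith) (by omega)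
  have hnorm : ∀ m : ℕ, ‖z ^ m / (qFactorial q m : ℂ)‖ = ‖z‖ ^ m / qFactorial q m := by
    intro m
    rw [norm_div, norm_pow, Complex.norm_real, Real.norm_eq_abs,
      abs_of_pos (qFactorial_pos hq m)]
  rw [hnorm, hnorm, qFactorial_succ, pow_succ]
  set A : ℝ := (q ^ (n + 1) - 1) / (q - 1) with hA
  have hApos : 0 < A := div_pos hq1 (by linarith)
  have hA2 : 2 * ‖z‖ ≤ A := by
    rw [hA, le_div_iff₀ (by linarith)]
    linarith
  have heq : ‖z‖ ^ n * ‖z‖ / (qFactorial q n * A) = (‖z‖ / A) * (‖z‖ ^ n / qFactorial q n) := by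
    field_simp
  rw [heq]
  have h12 : ‖z‖ / A ≤ 1 / 2 := by
    rw [div_le_div_iff₀ hApos (by norm_num)]
    linarith
  calc ‖z‖ / A * (‖z‖ ^ n / qFactorial q n) ≤ 1/2 * (‖z‖ ^ n / qFactorial q n) :=
        mul_le_mul_of_nonneg_right h12 (by positivity)
    _ = 1/2 * (‖z‖ ^ n / qFactorial q n) := rfl

lemma qFactorial_ne_zero' (hq : 1 < q) (n : ℕ) : (qFactorial q n : ℂ) ≠ 0 := by
  exact Complex.ofReal_ne_zero.2 (ne_of_gt (qFactorial_pos hq n))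

lemma qExp_funct (hq : 1 < q) (z : ℂ) :
    qExp q ((q : ℂ) * z) = (1 + ((q : ℂ) - 1) * z) * qExp q z := by

  have hs := summable_qExp hq z
  have hs2 := summable_qExp hq ((q : ℂ) * z)
  have hs' : Summable (fun n : ℕ => z ^ (n+1) / (qFactorial q (n+1) : ℂ)) :=
    (summable_nat_add_iff (f := fun n : ℕ => z ^ n / (qFactorial q n : ℂ)) 1).2 hs
  have hs2' : Summable (fun n : ℕ => ((q:ℂ)*z) ^ (n+1) / (qFactorial q (n+1) : ℂ)) :=
    (summable_nat_add_iff (f := fun n : ℕ => ((q:ℂ)*z) ^ n / (qFactorial q n : ℂ)) 1).2 hs2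
  have hT : ∀ n : ℕ, ((q:ℂ)*z) ^ (n+1) / (qFactorial q (n+1) : ℂ)
      = z ^ (n+1) / (qFactorial q (n+1) : ℂ) + (((q:ℂ)-1)*z) * (z ^ n / (qFactorial q n : ℂ)) := by
    intro n
    have hF : (qFactorial q (n+1) : ℂ) = (qFactorial q n : ℂ) * (((q:ℂ) ^ (n+1) - 1) / ((q:ℂ) - 1)) := by
      rw [qFactorial_succ]; push_cast; ring
    have h0 : (qFactorial q n : ℂ) ≠ 0 := qFactorial_ne_zero' hq n
    have h1 : ((q:ℂ) - 1) ≠ 0 := by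
      simpa using sub_ne_zero.2 (by exact_mod_cast (by linarith : q ≠ 1))
    have h2 : ((q:ℂ) ^ (n+1) - 1) ≠ 0 := by
      have : (q : ℝ) ^ (n+1) ≠ 1 := ne_of_gt (one_lt_pow₀ hq (by omega))
      intro h
      apply this
      have := sub_eq_zero.1 h
      exact_mod_cast this
    rw [hF]
    field_simp
    ring
  have key : (∑' n : ℕ, ((q:ℂ)*z) ^ (n+1) / (qFactorial q (n+1) : ℂ))
      = (∑' n : ℕ, z ^ (n+1) / (qFactorial q (n+1) : ℂ)) + (((q:ℂ)-1)*z) * qExp q z := by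
    rw [tsum_congr hT, Summable.tsum_add hs' (hs.mul_left _), tsum_mul_left]
    rfl
  have e1 : qExp q ((q:ℂ)*z) = 1 + ∑' n : ℕ, ((q:ℂ)*z) ^ (n+1) / (qFactorial q (n+1) : ℂ) := by
    rw [qExp, Summable.tsum_eq_zero_add hs2]
    simp [qFactorial]
  have e2 : qExp q z = 1 + ∑' n : ℕ, z ^ (n+1) / (qFactorial q (n+1) : ℂ) := by
    rw [qExp, Summable.tsum_eq_zero_add hs]
    simp [qFactorial]
  rw [e1, key, e2]
  ring


lemma half_le_qExp (hq : 1 < q) (w : ℂ) (hw : ‖w‖ ≤ 1/3) : 1/2 ≤ ‖qExp q w‖ := by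
  have hs := summable_qExp hq w
  have hs' : Summable (fun n : ℕ => w ^ (n+1) / (qFactorial q (n+1) : ℂ)) :=
    (summable_nat_add_iff (f := fun n : ℕ => w ^ n / (qFactorial q n : ℂ)) 1).2 hs
  have e : qExp q w = 1 + ∑' n : ℕ, w ^ (n+1) / (qFactorial q (n+1) : ℂ) := by
    rw [qExp, Summable.tsum_eq_zero_add hs]
    simp [qFactorial]
  set S := ∑' n : ℕ, w ^ (n+1) / (qFactorial q (n+1) : ℂ) with hS
  have hgeo : Summable (fun n : ℕ => (1/3 : ℝ) ^ (n+1)) := by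
    have := (summable_geometric_of_lt_one (by norm_num) (by norm_num : (1/3:ℝ) < 1)).mul_right (1/3)
    apply this.congr
    intro n
    rw [pow_succ]
  have hbound : ‖S‖ ≤ 1/2 := by
    have h1 : ‖S‖ ≤ ∑' n : ℕ, ‖w ^ (n+1) / (qFactorial q (n+1) : ℂ)‖ :=
      norm_tsum_le_tsum_norm (summable_norm_iff.mpr hs')
    have h2 : ∑' n : ℕ, ‖w ^ (n+1) / (qFactorial q (n+1) : ℂ)‖ ≤ ∑' n : ℕ, (1/3 : ℝ) ^ (n+1) := by
      apply Summable.tsum_le_tsum _ (summable_norm_iff.mpr hs') hgeo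
      intro n
      have hF1 : 1 ≤ qFactorial q (n+1) := one_le_qFactorial hq (n+1)
      have : ‖w ^ (n+1) / (qFactorial q (n+1) : ℂ)‖ = ‖w‖ ^ (n+1) / qFactorial q (n+1) := by
        rw [norm_div, norm_pow, Complex.norm_real, Real.norm_eq_abs,
          abs_of_pos (qFactorial_pos hq (n+1))]
      rw [this]
      calc ‖w‖ ^ (n+1) / qFactorial q (n+1) ≤ ‖w‖ ^ (n+1) / 1 := by
            apply div_le_div_of_nonneg_left (by positivity) (by norm_num) hF1
        _ = ‖w‖ ^ (n+1) := by ring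
        _ ≤ (1/3) ^ (n+1) := pow_le_pow_left₀ (norm_nonneg w) hw (n+1)
    have h3 : ∑' n : ℕ, (1/3 : ℝ) ^ (n+1) = 1/2 := by
      have : ∑' n : ℕ, (1/3 : ℝ) ^ (n+1) = (∑' n : ℕ, (1/3:ℝ)^n) * (1/3) := by
        rw [← tsum_mul_right]
        exact tsum_congr fun n => by rw [pow_succ]
      rw [this, tsum_geometric_of_lt_one (by norm_num) (by norm_num)]
      norm_num
    linarith
  have : (1:ℝ) ≤ ‖qExp q w‖ + ‖S‖ := by
    calc (1:ℝ) = ‖(1 + S) - S‖ := by norm_num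
      _ ≤ ‖1 + S‖ + ‖S‖ := norm_sub_le _ _
      _ = ‖qExp q w‖ + ‖S‖ := by rw [← e]
  linarith

lemma qExp_step (hq : 1 < q) (z : ℂ) :
    qExp q z = (1 + ((q : ℂ) - 1) * (z / (q:ℂ))) * qExp q (z / (q:ℂ)) := by
  have hq0 : (q:ℂ) ≠ 0 := Complex.ofReal_ne_zero.2 (by linarith)
  have h := qExp_funct hq (z / (q:ℂ))
  have hz : (q:ℂ) * (z / (q:ℂ)) = z := by field_simp
  rw [hz] at h
  exact h

lemma one_lt_sqrt_q (hq : 1 < q) : 1 < Real.sqrt q := by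
  have : (1:ℝ) = Real.sqrt 1 := by simp
  rw [this]
  exact Real.sqrt_lt_sqrt (by norm_num) hq

lemma qExp_iter (hq : 1 < q) :
    ∀ n : ℕ, ∀ z : ℂ, ‖z‖ < Real.sqrt q / (q - 1) →
      (1 - 1 / Real.sqrt q) ^ n * ‖qExp q (z / (q:ℂ) ^ n)‖ ≤ ‖qExp q z‖ := by
  have hsq := one_lt_sqrt_q hq
  have hc0 : 0 < 1 - 1 / Real.sqrt q := by
    have : 1 / Real.sqrt q < 1 := by
      rw [div_lt_one (by linarith)]; exact hsq
    linarith
  intro n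
  induction n with
  | zero => intro z hz; simp
  | succ n ih =>
    intro z hz
    -- w = z / q^n still in the disk
    have hqn : (1:ℝ) ≤ q ^ n := one_le_pow₀ (le_of_lt hq)
    have hqc : ((q:ℂ)) ≠ 0 := Complex.ofReal_ne_zero.2 (by linarith)
    have hqcn : ((q:ℂ) ^ n) ≠ 0 := pow_ne_zero n hqc
    have hwn : ‖z / (q:ℂ) ^ n‖ < Real.sqrt q / (q - 1) := by
      rw [norm_div, norm_pow, Complex.norm_real, Real.norm_eq_abs, abs_of_pos (by linarith : (0:ℝ) < q)]
      calc ‖z‖ / q ^ n ≤ ‖z‖ / 1 := by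
            apply div_le_div_of_nonneg_left (norm_nonneg z) (by norm_num) hqn
        _ = ‖z‖ := by ring
        _ < _ := hz
    set w := z / (q:ℂ) ^ n with hw
    -- step at w
    have hstep := qExp_step hq w
    have hww : w / (q:ℂ) = z / (q:ℂ) ^ (n+1) := by
      rw [hw, div_div, ← pow_succ]
    have hfac : 1 - 1 / Real.sqrt q ≤ ‖1 + ((q:ℂ) - 1) * (w / (q:ℂ))‖ := by
      have hnw : ‖((q:ℂ) - 1) * (w / (q:ℂ))‖ ≤ 1 / Real.sqrt q := by
        rw [norm_mul, norm_div]
        have h1 : ‖(q:ℂ) - 1‖ = q - 1 := by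
          rw [show ((q:ℂ) - 1) = ((q - 1 : ℝ) : ℂ) by push_cast; ring,
            Complex.norm_real, Real.norm_eq_abs, abs_of_pos (by linarith)]
        have h2 : ‖(q:ℂ)‖ = q := by
          rw [Complex.norm_real, Real.norm_eq_abs, abs_of_pos (by linarith)]
        rw [h1, h2]
        have hqpos : (0:ℝ) < q := by linarith
        have hsqq : Real.sqrt q * Real.sqrt q = q := Real.mul_self_sqrt (le_of_lt hqpos)
        have hwle : ‖w‖ ≤ Real.sqrt q / (q - 1) := le_of_lt hwn
        calc (q - 1) * (‖w‖ / q) ≤ (q - 1) * ((Real.sqrt q / (q - 1)) / q) := by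
              apply mul_le_mul_of_nonneg_left _ (by linarith)
              gcongr
          _ = Real.sqrt q / q := by
              rw [div_div, mul_div_assoc', mul_div_mul_left _ _ (by linarith : q - 1 ≠ 0)]
          _ = 1 / Real.sqrt q := by
              rw [div_eq_div_iff (by linarith) (by linarith)]
              simpa using hsqq
      calc 1 - 1 / Real.sqrt q ≤ 1 - ‖((q:ℂ) - 1) * (w / (q:ℂ))‖ := by linarith
        _ ≤ ‖1 + ((q:ℂ) - 1) * (w / (q:ℂ))‖ := by
            have := norm_sub_le (1 + ((q:ℂ) - 1) * (w / (q:ℂ))) (((q:ℂ) - 1) * (w / (q:ℂ)))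
            simp only [add_sub_cancel_right] at this
            rw [show ‖(1:ℂ)‖ = 1 by simp] at this
            linarith
    have hstepnorm : (1 - 1 / Real.sqrt q) * ‖qExp q (z / (q:ℂ) ^ (n+1))‖ ≤ ‖qExp q w‖ := by
      rw [hstep, norm_mul, ← hww]
      exact mul_le_mul_of_nonneg_right hfac (norm_nonneg _)
    calc (1 - 1 / Real.sqrt q) ^ (n+1) * ‖qExp q (z / (q:ℂ) ^ (n+1))‖
        = (1 - 1 / Real.sqrt q) ^ n * ((1 - 1 / Real.sqrt q) * ‖qExp q (z / (q:ℂ) ^ (n+1))‖) := by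
          ring
      _ ≤ (1 - 1 / Real.sqrt q) ^ n * ‖qExp q w‖ :=
          mul_le_mul_of_nonneg_left hstepnorm (by positivity)
      _ ≤ ‖qExp q z‖ := ih z hz

theorem qExp_lower_bound_disk (q : ℝ) (hq : 1 < q) :
    ∃ C₀ : ℝ, 0 < C₀ ∧ ∀ z : ℂ, ‖z‖ < Real.sqrt q / (q - 1) → C₀ ≤ ‖qExp q z‖ := by
  set R := Real.sqrt q / (q - 1) with hR
  have hsq := one_lt_sqrt_q hq
  have hc0 : 0 < 1 - 1 / Real.sqrt q := by
    have : 1 / Real.sqrt q < 1 := by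
      rw [div_lt_one (by linarith)]; exact hsq
    linarith
  have hRpos : 0 < R := div_pos (by linarith) (by linarith)
  obtain ⟨N, hN⟩ := ((tendsto_pow_atTop_atTop_of_one_lt hq).eventually_ge_atTop (3 * R)).exists
  refine ⟨(1 - 1 / Real.sqrt q) ^ N * (1/2), by positivity, ?_⟩
  intro z hz
  have hqNpos : (0:ℝ) < q ^ N := by positivity
  have hwnorm : ‖z / (q:ℂ) ^ N‖ ≤ 1/3 := by
    rw [norm_div, norm_pow, Complex.norm_real, Real.norm_eq_abs, abs_of_pos (by linarith : (0:ℝ) < q)]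
    rw [div_le_div_iff₀ hqNpos (by norm_num)]
    calc ‖z‖ * 3 ≤ R * 3 := by nlinarith [le_of_lt hz]
      _ = 3 * R := by ring
      _ ≤ q ^ N := hN
      _ = 1 * q ^ N := (one_mul _).symm
  have h1 := half_le_qExp hq (z / (q:ℂ) ^ N) hwnorm
  have h2 := qExp_iter hq N z hz
  calc (1 - 1 / Real.sqrt q) ^ N * (1/2)
      ≤ (1 - 1 / Real.sqrt q) ^ N * ‖qExp q (z / (q:ℂ) ^ N)‖ :=
        mul_le_mul_of_nonneg_left h1 (by positivity)
    _ ≤ ‖qExp q z‖ := h2
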